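/- Let h₁ ≥ 2 be an integer, let q_n ≥ 2 be any sequence of integers, set h_{n+1} = q_n·h_n, and let α_{n,j} ∈ ℤ/h_nℤ for 0 ≤ j < q_n be arbitrary. Define φ_n : ℤ/h_{n+1}ℤ → ℤ/h_nℤ by φ_n(j·h_n + k) = k + α_{n,j} (mod h_n) for 0 ≤ k < h_n, 0 ≤ j < q_n, and let X = {x ∈ Π_n ℤ/h_nℤ : φ_n(x_{n+1}) = x_n for all n} with its Borel σ-algebra. Then there exist a probability measure μ on X whose pushforward under each coordinate map x ↦ x_n is the uniform (normalized counting) measure on ℤ/h_nℤ, and an invertible μ-preserving transformation T : X → X such that for μ-almost every x ∈ X there exists N(x) with (Tx)_n = x_n + 1 for all n ≥ N(x). -/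

import Mathlib

open MeasureTheory
open scoped ENNReal

/-- The projection `φ_α : ℤ/mℤ → ℤ/hℤ` (intended for `m = q·h` and a tuple
`α ∈ (ℤ/hℤ)^q`), `φ_α(j·h + k) = k + α_j (mod h)` for `0 ≤ k < h`, `0 ≤ j < q`. -/
def phiMap {m : ℕ} (h q : ℕ) (α : ZMod q → ZMod h) (x : ZMod m) : ZMod h :=
  ((x.val % h : ℕ) : ZMod h) + α ((x.val / h : ℕ) : ZMod q)

/-- The inverse limit `X = {x ∈ Π_n ℤ/h_nℤ : φ_n(x_{n+1}) = x_n}` of the cyclic groups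
`ℤ/h_nℤ` along the projections `φ_n`, with its (Borel) product–subtype σ-algebra. -/
abbrev InvLimit (h q : ℕ → ℕ) (α : ∀ n, ZMod (q n) → ZMod (h n)) : Type :=
  {x : ∀ n, ZMod (h n) // ∀ n, phiMap (h n) (q n) (α n) (x (n + 1)) = x n}

namespace AM

variable (h q : ℕ → ℕ) (α : ∀ n, ZMod (q n) → ZMod (h n))

/-- `phiMap` at the level of `val`s. -/
def Pf (k : ℕ) (a : ℕ) : ℕ := (a % h k + (α k ((a / h k : ℕ) : ZMod (q k))).val) % h k

/-- push a level-`M` val down to level `n` (junk if `n > M`). -/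
def Df (n : ℕ) : ℕ → ℕ → ℕ
  | 0, a => a
  | M + 1, a => if M + 1 ≤ n then a else Df n M (Pf h q α M a)

variable {h q}

lemma h_pos (hh0 : 2 ≤ h 0) (hrec : ∀ n, h (n + 1) = q n * h n) (hq : ∀ n, 2 ≤ q n) :
    ∀ n, 0 < h n := by
  intro n; induction n with
  | zero => omega
  | succ m ih => rw [hrec]; exact Nat.mul_pos (by have := hq m; omega) ih

lemma h_two_le (hh0 : 2 ≤ h 0) (hrec : ∀ n, h (n + 1) = q n * h n) (hq : ∀ n, 2 ≤ q n) :
    ∀ n, 2 ≤ h n := by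
  intro n; cases n with
  | zero => exact hh0
  | succ m =>
    rw [hrec]
    calc 2 ≤ 2 * 1 := by omega
    _ ≤ q m * h m := Nat.mul_le_mul (hq m) (h_pos hh0 hrec hq m)

lemma h_growth (hh0 : 2 ≤ h 0) (hrec : ∀ n, h (n + 1) = q n * h n) (hq : ∀ n, 2 ≤ q n) :
    ∀ n, 2 ^ (n + 1) ≤ h n := by
  intro n; induction n with
  | zero => simpa using hh0
  | succ m ih =>
    rw [hrec, pow_succ, Nat.mul_comm (2 ^ (m+1)) 2]
    exact Nat.mul_le_mul (hq m) ih

lemma h_dvd (hrec : ∀ n, h (n + 1) = q n * h n) (n : ℕ) : h n ∣ h (n + 1) :=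
  ⟨q n, by rw [hrec, Nat.mul_comm]⟩

lemma h_dvd_le (hrec : ∀ n, h (n + 1) = q n * h n) {n M : ℕ} (hnM : n ≤ M) : h n ∣ h M := by
  induction M with
  | zero => simp [Nat.le_zero.mp hnM]
  | succ m ih =>
    rcases Nat.lt_or_ge n (m+1) with hlt | hge
    · exact (ih (by omega)).trans (h_dvd hrec m)
    · have : n = m + 1 := by omega
      simp [this]

variable {α}

lemma Pf_lt (hpos : 0 < h k) (a : ℕ) : Pf h q α k a < h k := Nat.mod_lt _ hpos

/-- `phiMap` expressed through `Pf`. -/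
lemma phiMap_eq_Pf {k : ℕ} (hk : 0 < h k) (z : ZMod (h (k + 1))) :
    phiMap (h k) (q k) (α k) z = ((Pf h q α k z.val : ℕ) : ZMod (h k)) := by
  haveI : NeZero (h k) := ⟨by omega⟩
  unfold phiMap Pf
  conv_rhs => rw [ZMod.natCast_mod, Nat.cast_add, ZMod.natCast_val, ZMod.cast_id]

lemma Df_of_le {n M : ℕ} (hMn : M ≤ n) (a : ℕ) : Df h q α n M a = a := by
  cases M with
  | zero => rfl
  | succ m => simp only [Df, if_pos hMn]

lemma Df_succ (n M a : ℕ) :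
    Df h q α n (M + 1) a = if M + 1 ≤ n then a else Df h q α n M (Pf h q α M a) := rfl

lemma Df_step {n M : ℕ} (hnM : n < M) (a : ℕ) :
    Df h q α n M a = Pf h q α n (Df h q α (n + 1) M a) := by
  induction M generalizing a with
  | zero => omega
  | succ m ih =>
    rw [Df_succ, if_neg (by omega), Df_succ]
    rcases Nat.lt_or_ge n m with hlt | hge
    · rw [if_neg (by omega), ih hlt]
    · have hnm : n = m := by omega
      subst hnm
      rw [if_pos (by omega), Df_of_le (le_refl n)]

lemma Df_lt {n M : ℕ} (hnM : n < M) (hpos : 0 < h n) (a : ℕ) : Df h q α n M a < h n := by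
  rw [Df_step hnM]; exact Pf_lt hpos _

lemma Df_eval (hpos : ∀ n, 0 < h n) (x : InvLimit h q α) {n M : ℕ} (hnM : n ≤ M) :
    Df h q α n M (x.1 M).val = (x.1 n).val := by
  induction M with
  | zero => have hn0 : n = 0 := by omega
            subst hn0; rfl
  | succ m ih =>
    rcases Nat.lt_or_ge n (m+1) with hlt | hge
    · rw [Df_succ, if_neg (by omega)]
      have hP : Pf h q α m (x.1 (m+1)).val = (x.1 m).val := by
        have h2 := congrArg ZMod.val (x.2 m)
        rwa [phiMap_eq_Pf (hpos m), ZMod.val_natCast,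
          Nat.mod_eq_of_lt (Pf_lt (hpos m) _)] at h2
      rw [hP]; exact ih (by omega)
    · have hn : n = m + 1 := by omega
      subst hn
      rw [Df_of_le (le_refl _)]

/-- a point of the inverse limit is determined by any tail of its coordinates -/
lemma ext_of_tail (hpos : ∀ n, 0 < h n) (x y : InvLimit h q α) (K : ℕ)
    (hxy : ∀ k, K ≤ k → x.1 k = y.1 k) : x = y := by
  apply Subtype.ext; funext n
  rcases Nat.lt_or_ge n K with hlt | hge
  · haveI : NeZero (h n) := ⟨by have := hpos n; omega⟩
    have h1 : (x.1 n).val = (y.1 n).val := by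
      rw [← Df_eval hpos x (le_of_lt hlt), ← Df_eval hpos y (le_of_lt hlt), hxy K (le_refl _)]
    have := congrArg (Nat.cast : ℕ → ZMod (h n)) h1
    rwa [ZMod.natCast_val, ZMod.cast_id, ZMod.natCast_val, ZMod.cast_id] at this
  · exact hxy n hge

/-- coordinates below `M` are pushed-down from level `M`. -/
lemma coord_eq (hpos : ∀ n, 0 < h n) (x : InvLimit h q α) {n M : ℕ} (hnM : n ≤ M) :
    x.1 n = ((Df h q α n M (x.1 M).val : ℕ) : ZMod (h n)) := by
  haveI : NeZero (h n) := ⟨by have := hpos n; omega⟩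
  rw [Df_eval hpos x hnM, ZMod.natCast_val, ZMod.cast_id]


/-! ### elementary mod/div lemmas -/

lemma nmod_succ {a b : ℕ} (hc : a % b + 1 < b) : (a + 1) % b = a % b + 1 := by
  have hb : 1 < b := by omega
  conv_lhs => rw [Nat.add_mod, Nat.mod_eq_of_lt hb]
  exact Nat.mod_eq_of_lt hc

lemma ndiv_succ {a b : ℕ} (hc : a % b + 1 < b) : (a + 1) / b = a / b := by
  have hdm := Nat.div_add_mod a b
  have ha : a + 1 = b * (a / b) + (a % b + 1) := by omega
  rw [ha, Nat.mul_add_div (by omega), Nat.div_eq_of_lt hc, Nat.add_zero]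

lemma nmod_pred {a b : ℕ} (hb : 0 < b) (hc : 1 ≤ a % b) : (a - 1) % b = a % b - 1 := by
  have hdm := Nat.div_add_mod a b
  have hlt : a % b < b := Nat.mod_lt _ hb
  have h3 : a % b - 1 < b := by omega
  have ha : a - 1 = b * (a / b) + (a % b - 1) := by omega
  rw [ha, Nat.mul_add_mod, Nat.mod_eq_of_lt h3]

lemma ndiv_pred {a b : ℕ} (hb : 0 < b) (hc : 1 ≤ a % b) : (a - 1) / b = a / b := by
  have hdm := Nat.div_add_mod a b
  have hlt : a % b < b := Nat.mod_lt _ hb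
  have h3 : a % b - 1 < b := by omega
  have ha : a - 1 = b * (a / b) + (a % b - 1) := by omega
  rw [ha, Nat.mul_add_div hb, Nat.div_eq_of_lt h3, Nat.add_zero]

/-! ### carry lemmas -/

lemma cast_Pf_succ {k a : ℕ} (hc : a % h k + 1 < h k) :
    ((Pf h q α k (a + 1) : ℕ) : ZMod (h k)) = ((Pf h q α k a : ℕ) : ZMod (h k)) + 1 := by
  unfold Pf
  rw [nmod_succ hc, ndiv_succ hc, ZMod.natCast_mod, ZMod.natCast_mod]
  push_cast; ring

lemma cast_Pf_pred {k a : ℕ} (hb : 0 < h k) (hc : 1 ≤ a % h k) :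
    ((Pf h q α k (a - 1) : ℕ) : ZMod (h k)) = ((Pf h q α k a : ℕ) : ZMod (h k)) - 1 := by
  unfold Pf
  rw [nmod_pred hb hc, ndiv_pred hb hc, ZMod.natCast_mod, ZMod.natCast_mod,
    Nat.cast_add, Nat.cast_add, Nat.cast_sub hc]
  ring

lemma val_add_one {k : ℕ} (hrec : ∀ n, h (n + 1) = q n * h n) (h2 : ∀ n, 2 ≤ h n)
    (z : ZMod (h (k + 1))) (hz : z.val % h k + 1 < h k) : (z + 1).val = z.val + 1 := by
  haveI : NeZero (h (k + 1)) := ⟨by have := h2 (k + 1); omega⟩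
  haveI : Fact (1 < h (k + 1)) := ⟨by have := h2 (k + 1); omega⟩
  have hvlt : z.val < h (k + 1) := ZMod.val_lt z
  have hqk : z.val / h k < q k := by
    apply Nat.div_lt_of_lt_mul
    calc z.val < h (k + 1) := hvlt
    _ = q k * h k := hrec k
    _ = h k * q k := Nat.mul_comm _ _
  have hdm := Nat.div_add_mod z.val (h k)
  have h1 : z.val + 1 < h (k + 1) := by
    calc z.val + 1 < h k * (z.val / h k) + h k := by omega
    _ = h k * (z.val / h k + 1) := by ring
    _ ≤ h k * q k := Nat.mul_le_mul_left _ hqk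
    _ = q k * h k := Nat.mul_comm _ _
    _ = h (k + 1) := (hrec k).symm
  rw [ZMod.val_add, ZMod.val_one, Nat.mod_eq_of_lt h1]

lemma val_sub_one {k : ℕ} (h2 : ∀ n, 2 ≤ h n)
    (z : ZMod (h (k + 1))) (hz : 1 ≤ z.val) : (z - 1).val = z.val - 1 := by
  haveI : NeZero (h (k + 1)) := ⟨by have := h2 (k + 1); omega⟩
  have hvlt : z.val < h (k + 1) := ZMod.val_lt z
  have key : ((z.val - 1 : ℕ) : ZMod (h (k + 1))) = z - 1 := by
    have h1 : (z.val - 1) + 1 = z.val := by omega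
    calc ((z.val - 1 : ℕ) : ZMod (h (k + 1))) = ↑((z.val - 1) + 1) - 1 := by push_cast; ring
    _ = ((z.val : ℕ) : ZMod (h (k + 1))) - 1 := by rw [h1]
    _ = z - 1 := by rw [ZMod.natCast_val, ZMod.cast_id]
  rw [← key, ZMod.val_natCast, Nat.mod_eq_of_lt (by omega)]

/-- the "height in column `k`" of a point. -/
def Cc (k : ℕ) (x : InvLimit h q α) : ℕ := (x.1 (k + 1)).val % h k

lemma phi_up {k : ℕ} (hrec : ∀ n, h (n + 1) = q n * h n) (h2 : ∀ n, 2 ≤ h n)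
    (x : InvLimit h q α) (hc : Cc k x + 1 < h k) :
    phiMap (h k) (q k) (α k) (x.1 (k + 1) + 1) = x.1 k + 1 := by
  have hpk : 0 < h k := by have := h2 k; omega
  rw [phiMap_eq_Pf hpk, val_add_one hrec h2 _ hc, cast_Pf_succ hc, ← phiMap_eq_Pf hpk, x.2 k]

lemma phi_down {k : ℕ} (h2 : ∀ n, 2 ≤ h n)
    (x : InvLimit h q α) (hc : 1 ≤ Cc k x) :
    phiMap (h k) (q k) (α k) (x.1 (k + 1) - 1) = x.1 k - 1 := by
  have hpk : 0 < h k := by have := h2 k; omega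
  have hv1 : 1 ≤ (x.1 (k + 1)).val := by
    rcases Nat.eq_zero_or_pos (x.1 (k + 1)).val with h0 | h0
    · exfalso; unfold Cc at hc; rw [h0] at hc; simp at hc
    · exact h0
  rw [phiMap_eq_Pf hpk, val_sub_one h2 _ hv1, cast_Pf_pred hpk hc, ← phiMap_eq_Pf hpk, x.2 k]

/-! ### the shift maps -/

/-- the forward shift with "no carry above `N`". -/
def wUp (x : InvLimit h q α) (N : ℕ) : ∀ n, ZMod (h n) :=
  fun n => if N ≤ n then x.1 n + 1 else ((Df h q α n N ((x.1 N + 1).val) : ℕ) : ZMod (h n))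

def wDown (x : InvLimit h q α) (N : ℕ) : ∀ n, ZMod (h n) :=
  fun n => if N ≤ n then x.1 n - 1 else ((Df h q α n N ((x.1 N - 1).val) : ℕ) : ZMod (h n))

lemma wUp_mem (hrec : ∀ n, h (n + 1) = q n * h n) (h2 : ∀ n, 2 ≤ h n)
    (x : InvLimit h q α) (N : ℕ) (hband : ∀ k, N ≤ k → Cc k x + 1 < h k) :
    ∀ n, phiMap (h n) (q n) (α n) (wUp x N (n + 1)) = wUp x N n := by
  intro n
  rcases le_or_gt N n with hNn | hnN
  · simp only [wUp]
    rw [if_pos (show N ≤ n + 1 by omega), if_pos hNn]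
    exact phi_up hrec h2 x (hband n hNn)
  · rcases eq_or_lt_of_le (show n + 1 ≤ N by omega) with hN1 | hN1
    · subst hN1
      simp only [wUp]
      rw [if_pos (le_refl (n + 1)), if_neg (show ¬ n + 1 ≤ n by omega)]
      rw [Df_succ, if_neg (show ¬ n + 1 ≤ n by omega), Df_of_le (le_refl _)]
      exact phiMap_eq_Pf (by have := h2 n; omega) _
    · simp only [wUp]
      rw [if_neg (show ¬ N ≤ n + 1 by omega), if_neg (show ¬ N ≤ n by omega)]
      have hlt1 : Df h q α (n + 1) N ((x.1 N + 1).val) < h (n + 1) := by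
        exact Df_lt hN1 (by have := h2 (n + 1); omega) _
      rw [phiMap_eq_Pf (by have := h2 n; omega), ZMod.val_natCast, Nat.mod_eq_of_lt hlt1,
        ← Df_step (by omega)]

lemma wDown_mem (hrec : ∀ n, h (n + 1) = q n * h n) (h2 : ∀ n, 2 ≤ h n)
    (x : InvLimit h q α) (N : ℕ) (hband : ∀ k, N ≤ k → 1 ≤ Cc k x) :
    ∀ n, phiMap (h n) (q n) (α n) (wDown x N (n + 1)) = wDown x N n := by
  intro n
  rcases le_or_gt N n with hNn | hnN
  · simp only [wDown]
    rw [if_pos (show N ≤ n + 1 by omega), if_pos hNn]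
    exact phi_down h2 x (hband n hNn)
  · rcases eq_or_lt_of_le (show n + 1 ≤ N by omega) with hN1 | hN1
    · subst hN1
      simp only [wDown]
      rw [if_pos (le_refl (n + 1)), if_neg (show ¬ n + 1 ≤ n by omega)]
      rw [Df_succ, if_neg (show ¬ n + 1 ≤ n by omega), Df_of_le (le_refl _)]
      exact phiMap_eq_Pf (by have := h2 n; omega) _
    · simp only [wDown]
      rw [if_neg (show ¬ N ≤ n + 1 by omega), if_neg (show ¬ N ≤ n by omega)]
      have hlt1 : Df h q α (n + 1) N ((x.1 N - 1).val) < h (n + 1) := by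
        exact Df_lt hN1 (by have := h2 (n + 1); omega) _
      rw [phiMap_eq_Pf (by have := h2 n; omega), ZMod.val_natCast, Nat.mod_eq_of_lt hlt1,
        ← Df_step (by omega)]

/-- the set of "doubly transitive" points where the odometer is defined. -/
def Good (x : InvLimit h q α) : Prop :=
  ∀ m : ℕ, ∃ N, ∀ k, N ≤ k → m ≤ Cc k x ∧ Cc k x + m < h k

def TupP (hrec : ∀ n, h (n + 1) = q n * h n) (h2 : ∀ n, 2 ≤ h n)
    (x : InvLimit h q α) (N : ℕ) (hband : ∀ k, N ≤ k → Cc k x + 1 < h k) : InvLimit h q α :=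
  ⟨wUp x N, wUp_mem hrec h2 x N hband⟩

def TdnP (hrec : ∀ n, h (n + 1) = q n * h n) (h2 : ∀ n, 2 ≤ h n)
    (x : InvLimit h q α) (N : ℕ) (hband : ∀ k, N ≤ k → 1 ≤ Cc k x) : InvLimit h q α :=
  ⟨wDown x N, wDown_mem hrec h2 x N hband⟩

open Classical in
/-- the odometer. -/
noncomputable def Tfun (hrec : ∀ n, h (n + 1) = q n * h n) (h2 : ∀ n, 2 ≤ h n)
    (x : InvLimit h q α) : InvLimit h q α :=
  if hx : Good x then
    TupP hrec h2 x (Nat.find (hx 1)) (fun k hk => ((Nat.find_spec (hx 1)) k hk).2)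
  else x

open Classical in
noncomputable def Tinv (hrec : ∀ n, h (n + 1) = q n * h n) (h2 : ∀ n, 2 ≤ h n)
    (x : InvLimit h q α) : InvLimit h q α :=
  if hx : Good x then
    TdnP hrec h2 x (Nat.find (hx 1)) (fun k hk => ((Nat.find_spec (hx 1)) k hk).1)
  else x

lemma Cc_TupP {hrec} {h2} (x : InvLimit h q α) {N : ℕ} {hband} {k : ℕ} (hk : N ≤ k) :
    Cc k (TupP hrec h2 x N hband) = Cc k x + 1 := by
  have hc := hband k hk
  unfold Cc TupP wUp
  simp only [if_pos (show N ≤ k + 1 by omega)]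
  rw [val_add_one hrec h2 _ hc, nmod_succ hc]

lemma Cc_TdnP {hrec} {h2} (x : InvLimit h q α) {N : ℕ} {hband} {k : ℕ} (hk : N ≤ k) :
    Cc k (TdnP hrec h2 x N hband) = Cc k x - 1 := by
  have hc := hband k hk
  have hv1 : 1 ≤ (x.1 (k + 1)).val := by
    rcases Nat.eq_zero_or_pos (x.1 (k + 1)).val with h0 | h0
    · exfalso; unfold Cc at hc; rw [h0] at hc; simp at hc
    · exact h0
  unfold Cc TdnP wDown
  simp only [if_pos (show N ≤ k + 1 by omega)]
  rw [val_sub_one h2 _ hv1, nmod_pred (by have := h2 k; omega) hc]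

lemma Good_TupP {hrec} {h2} (x : InvLimit h q α) {N : ℕ} {hband} (hx : Good x) :
    Good (TupP hrec h2 x N hband) := by
  intro m
  obtain ⟨N', hN'⟩ := hx (m + 1)
  refine ⟨max N N', fun k hk => ?_⟩
  rw [Cc_TupP x (le_trans (le_max_left _ _) hk)]
  have := hN' k (le_trans (le_max_right _ _) hk)
  omega

lemma Good_TdnP {hrec} {h2} (x : InvLimit h q α) {N : ℕ} {hband} (hx : Good x) :
    Good (TdnP hrec h2 x N hband) := by
  intro m
  obtain ⟨N', hN'⟩ := hx (m + 1)
  refine ⟨max N N', fun k hk => ?_⟩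
  rw [Cc_TdnP x (le_trans (le_max_left _ _) hk)]
  have := hN' k (le_trans (le_max_right _ _) hk)
  omega

lemma Tinv_Tfun (hrec : ∀ n, h (n + 1) = q n * h n) (h2 : ∀ n, 2 ≤ h n)
    (x : InvLimit h q α) : Tinv hrec h2 (Tfun hrec h2 x) = x := by
  classical
  by_cases hx : Good x
  · rw [Tfun, dif_pos hx]
    have hx' : Good (TupP hrec h2 x (Nat.find (hx 1))
        (fun k hk => ((Nat.find_spec (hx 1)) k hk).2)) := Good_TupP x hx
    rw [Tinv, dif_pos hx']
    apply ext_of_tail (fun n => by have := h2 n; omega) _ _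
      (max (Nat.find (hx 1)) (Nat.find (hx' 1)))
    intro k hk
    set y := TupP hrec h2 x (Nat.find (hx 1)) (fun k hk => ((Nat.find_spec (hx 1)) k hk).2)
    have hk1 : Nat.find (hx' 1) ≤ k := le_trans (le_max_right _ _) hk
    have hk2 : Nat.find (hx 1) ≤ k := le_trans (le_max_left _ _) hk
    show wDown y _ k = x.1 k
    simp only [wDown]
    rw [if_pos hk1]
    show wUp x _ k - 1 = x.1 k
    simp only [wUp]
    rw [if_pos hk2]
    ring
  · have h1 : Tfun hrec h2 x = x := by rw [Tfun, dif_neg hx]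
    rw [h1, Tinv, dif_neg hx]

lemma Tfun_Tinv (hrec : ∀ n, h (n + 1) = q n * h n) (h2 : ∀ n, 2 ≤ h n)
    (x : InvLimit h q α) : Tfun hrec h2 (Tinv hrec h2 x) = x := by
  classical
  by_cases hx : Good x
  · rw [Tinv, dif_pos hx]
    have hx' : Good (TdnP hrec h2 x (Nat.find (hx 1))
        (fun k hk => ((Nat.find_spec (hx 1)) k hk).1)) := Good_TdnP x hx
    rw [Tfun, dif_pos hx']
    apply ext_of_tail (fun n => by have := h2 n; omega) _ _
      (max (Nat.find (hx 1)) (Nat.find (hx' 1)))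
    intro k hk
    set y := TdnP hrec h2 x (Nat.find (hx 1)) (fun k hk => ((Nat.find_spec (hx 1)) k hk).1)
    have hk1 : Nat.find (hx' 1) ≤ k := le_trans (le_max_right _ _) hk
    have hk2 : Nat.find (hx 1) ≤ k := le_trans (le_max_left _ _) hk
    show wUp y _ k = x.1 k
    simp only [wUp]
    rw [if_pos hk1]
    show wDown x _ k + 1 = x.1 k
    simp only [wDown]
    rw [if_pos hk2]
    ring
  · have h1 : Tinv hrec h2 x = x := by rw [Tinv, dif_neg hx]
    rw [h1, Tfun, dif_neg hx]

/-- the odometer as a permutation. -/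
noncomputable def Tperm (hrec : ∀ n, h (n + 1) = q n * h n) (h2 : ∀ n, 2 ≤ h n) :
    Equiv.Perm (InvLimit h q α) :=
  ⟨Tfun hrec h2, Tinv hrec h2, Tinv_Tfun hrec h2, Tfun_Tinv hrec h2⟩

lemma Tfun_high (hrec : ∀ n, h (n + 1) = q n * h n) (h2 : ∀ n, 2 ≤ h n)
    (x : InvLimit h q α) (hx : Good x) :
    ∃ N, ∀ n, N ≤ n → (Tfun hrec h2 x).1 n = x.1 n + 1 := by
  classical
  refine ⟨Nat.find (hx 1), fun n hn => ?_⟩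
  rw [Tfun, dif_pos hx]
  show wUp x _ n = x.1 n + 1
  simp only [wUp]
  rw [if_pos hn]

/-! ### the digit map and the measure -/

variable (h q α) in
/-- the `n`-th coordinate as a function of the mixed-radix integer at level `n`. -/
def xi : ∀ n : ℕ, ℕ → ZMod (h n)
  | 0 => fun a => (a : ZMod (h 0))
  | n + 1 => fun a =>
      (((xi n (a / q n) - α n ((a % q n : ℕ) : ZMod (q n))).val + (a % q n) * h n : ℕ) :
        ZMod (h (n + 1)))

lemma xi_succ (n a : ℕ) :
    xi h q α (n + 1) a =
      (((xi h q α n (a / q n) - α n ((a % q n : ℕ) : ZMod (q n))).val + (a % q n) * h n : ℕ) :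
        ZMod (h (n + 1))) := rfl

section xi_lemmas

variable (hrec : ∀ n, h (n + 1) = q n * h n) (h2 : ∀ n, 2 ≤ h n) (hq2 : ∀ n, 2 ≤ q n)
include hrec h2 hq2

lemma xi_arg_lt (n a : ℕ) :
    (xi h q α n (a / q n) - α n ((a % q n : ℕ) : ZMod (q n))).val + (a % q n) * h n
      < h (n + 1) := by
  haveI : NeZero (h n) := ⟨by have := h2 n; omega⟩
  have hv : (xi h q α n (a / q n) - α n ((a % q n : ℕ) : ZMod (q n))).val < h n := ZMod.val_lt _
  have hj : a % q n < q n := Nat.mod_lt _ (by have := hq2 n; omega)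
  calc _ < h n + (a % q n) * h n := by omega
  _ = (a % q n + 1) * h n := by ring
  _ ≤ q n * h n := Nat.mul_le_mul_right _ (by omega)
  _ = h (n + 1) := (hrec n).symm

lemma phi_xi (n a : ℕ) :
    phiMap (h n) (q n) (α n) (xi h q α (n + 1) a) = xi h q α n (a / q n) := by
  haveI : NeZero (h n) := ⟨by have := h2 n; omega⟩
  have hvlt : (xi h q α n (a / q n) - α n ((a % q n : ℕ) : ZMod (q n))).val < h n :=
    ZMod.val_lt _
  have hlt := xi_arg_lt (α := α) hrec h2 hq2 n a
  rw [xi_succ, phiMap_eq_Pf (by have := h2 n; omega), ZMod.val_natCast,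
    Nat.mod_eq_of_lt hlt]
  unfold Pf
  rw [Nat.add_mul_mod_self_right, Nat.add_mul_div_right _ _ (by have := h2 n; omega),
    Nat.div_eq_of_lt hvlt, Nat.zero_add, Nat.mod_eq_of_lt hvlt, ZMod.natCast_mod,
    Nat.cast_add, ZMod.natCast_val, ZMod.cast_id, ZMod.natCast_val, ZMod.cast_id]
  ring

lemma xi_inj : ∀ n, ∀ a b : ℕ, a < h n → b < h n → xi h q α n a = xi h q α n b → a = b := by
  intro n
  induction n with
  | zero =>
    intro a b ha hb hab
    change (a : ZMod (h 0)) = (b : ZMod (h 0)) at hab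
    have := congrArg ZMod.val hab
    rwa [ZMod.val_natCast_of_lt ha, ZMod.val_natCast_of_lt hb] at this
  | succ n ih =>
    intro a b ha hb hab
    haveI : NeZero (h n) := ⟨by have := h2 n; omega⟩
    have hqpos : 0 < q n := by have := hq2 n; omega
    have hhpos : 0 < h n := by have := h2 n; omega
    have hva : (xi h q α n (a / q n) - α n ((a % q n : ℕ) : ZMod (q n))).val < h n :=
      ZMod.val_lt _
    have hvb : (xi h q α n (b / q n) - α n ((b % q n : ℕ) : ZMod (q n))).val < h n :=
      ZMod.val_lt _
    rw [xi_succ, xi_succ] at hab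
    have hnat := congrArg ZMod.val hab
    rw [ZMod.val_natCast_of_lt (xi_arg_lt hrec h2 hq2 n a),
      ZMod.val_natCast_of_lt (xi_arg_lt hrec h2 hq2 n b)] at hnat
    -- extract mod and val parts
    have hjeq : a % q n = b % q n := by
      have h1 := congrArg (· / h n) hnat
      simp only [Nat.add_mul_div_right _ _ hhpos, Nat.div_eq_of_lt hva,
        Nat.div_eq_of_lt hvb, Nat.zero_add] at h1
      exact h1
    rw [hjeq] at hnat
    have hveq : (xi h q α n (a / q n) - α n ((b % q n : ℕ) : ZMod (q n))).val
        = (xi h q α n (b / q n) - α n ((b % q n : ℕ) : ZMod (q n))).val := by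
      omega
    have hxi : xi h q α n (a / q n) = xi h q α n (b / q n) := by
      have hc := congrArg (fun t : ℕ => ((t : ℕ) : ZMod (h n))) hveq
      simp only [ZMod.natCast_val, ZMod.cast_id] at hc
      exact sub_left_inj.mp hc
    have hda : a / q n < h n := by
      rw [Nat.div_lt_iff_lt_mul hqpos]
      calc a < h (n + 1) := ha
      _ = q n * h n := hrec n
      _ = h n * q n := Nat.mul_comm _ _
    have hdb : b / q n < h n := by
      rw [Nat.div_lt_iff_lt_mul hqpos]
      calc b < h (n + 1) := hb
      _ = q n * h n := hrec n
      _ = h n * q n := Nat.mul_comm _ _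
    have hdeq := ih _ _ hda hdb hxi
    have h4 := Nat.div_add_mod a (q n)
    have h5 := Nat.div_add_mod b (q n)
    rw [hdeq, hjeq] at h4
    omega

lemma xi_surj (n : ℕ) (t : ZMod (h n)) : ∃ a, a < h n ∧ xi h q α n a = t := by
  haveI : NeZero (h n) := ⟨by have := h2 n; omega⟩
  have hinj : Set.InjOn (xi h q α n) (Finset.range (h n)) := by
    intro a ha b hb hab
    exact xi_inj hrec h2 hq2 n a b (by simpa using ha) (by simpa using hb) hab
  have hcard : ((Finset.range (h n)).image (xi h q α n)).card = Fintype.card (ZMod (h n)) := by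
    rw [Finset.card_image_of_injOn hinj, Finset.card_range, ZMod.card]
  have huniv : (Finset.range (h n)).image (xi h q α n) = Finset.univ :=
    Finset.eq_univ_of_card _ hcard
  have ht : t ∈ (Finset.range (h n)).image (xi h q α n) := by rw [huniv]; exact Finset.mem_univ t
  obtain ⟨a, ha, hat⟩ := Finset.mem_image.mp ht
  exact ⟨a, by simpa using ha, hat⟩

end xi_lemmas

variable (h q α) in
/-- the point of the inverse limit associated to a real number. -/
noncomputable def Theta (hrec : ∀ n, h (n + 1) = q n * h n) (h2 : ∀ n, 2 ≤ h n)
    (hq2 : ∀ n, 2 ≤ q n) (r : ℝ) : InvLimit h q α :=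
  ⟨fun n => xi h q α n ⌊r * h n⌋₊, by
    intro n
    rw [phi_xi hrec h2 hq2]
    congr 1
    have hfl : (⌊r * h (n + 1)⌋₊ : ℕ) / q n = ⌊(r * h (n + 1)) / q n⌋₊ :=
      (Nat.floor_div_natCast (r * h (n + 1)) (q n)).symm
    rw [hfl]
    congr 1
    rw [hrec n]
    push_cast
    have hqne : (q n : ℝ) ≠ 0 := by
      have := hq2 n; positivity
    field_simp⟩

lemma measurable_Theta (hrec : ∀ n, h (n + 1) = q n * h n) (h2 : ∀ n, 2 ≤ h n)
    (hq2 : ∀ n, 2 ≤ q n) : Measurable (Theta h q α hrec h2 hq2) := by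
  apply Measurable.subtype_mk
  apply measurable_pi_lambda
  intro n
  exact measurable_from_top.comp (Nat.measurable_floor.comp (measurable_id.mul_const _))

variable (h q α) in
/-- the measure on the inverse limit. -/
noncomputable def muM (hrec : ∀ n, h (n + 1) = q n * h n) (h2 : ∀ n, 2 ≤ h n)
    (hq2 : ∀ n, 2 ≤ q n) : Measure (InvLimit h q α) :=
  Measure.map (Theta h q α hrec h2 hq2) (volume.restrict (Set.Ico (0:ℝ) 1))

lemma muM_prob (hrec : ∀ n, h (n + 1) = q n * h n) (h2 : ∀ n, 2 ≤ h n)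
    (hq2 : ∀ n, 2 ≤ q n) : IsProbabilityMeasure (muM h q α hrec h2 hq2) := by
  constructor
  rw [muM, Measure.map_apply (measurable_Theta hrec h2 hq2) MeasurableSet.univ,
    Set.preimage_univ, Measure.restrict_apply_univ, Real.volume_Ico]
  norm_num

lemma measurable_coord (n : ℕ) : Measurable (fun x : InvLimit h q α => x.1 n) :=
  (measurable_pi_apply n).comp measurable_subtype_coe

lemma muM_marginal (hrec : ∀ n, h (n + 1) = q n * h n) (h2 : ∀ n, 2 ≤ h n)
    (hq2 : ∀ n, 2 ≤ q n) (n : ℕ) :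
    (muM h q α hrec h2 hq2).map (fun x => x.1 n)
      = ((h n : ℝ≥0∞))⁻¹ • (Measure.count : Measure (ZMod (h n))) := by
  haveI : NeZero (h n) := ⟨by have := h2 n; omega⟩
  have hpos : (0:ℝ) < (h n : ℝ) := by have := h2 n; positivity
  rw [muM, Measure.map_map (measurable_coord n) (measurable_Theta hrec h2 hq2)]
  have hcomp : ((fun x : InvLimit h q α => x.1 n) ∘ Theta h q α hrec h2 hq2)
      = fun r : ℝ => xi h q α n ⌊r * h n⌋₊ := rfl
  rw [hcomp]
  have hmeas : Measurable fun r : ℝ => xi h q α n ⌊r * h n⌋₊ :=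
    measurable_from_top.comp (Nat.measurable_floor.comp (measurable_id.mul_const _))
  apply MeasureTheory.Measure.ext_of_singleton
  intro t
  obtain ⟨m, hm, hxt⟩ := xi_surj (α := α) hrec h2 hq2 n t
  rw [Measure.map_apply hmeas (measurableSet_singleton t),
    Measure.restrict_apply' measurableSet_Ico]
  have hm1 : ((m : ℝ) + 1) ≤ (h n : ℝ) := by exact_mod_cast hm
  have hset : (fun r : ℝ => xi h q α n ⌊r * h n⌋₊) ⁻¹' {t} ∩ Set.Ico 0 1
      = Set.Ico ((m : ℝ) / (h n : ℝ)) (((m : ℝ) + 1) / (h n : ℝ)) := by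
    ext r
    simp only [Set.mem_inter_iff, Set.mem_preimage, Set.mem_singleton_iff, Set.mem_Ico]
    constructor
    · rintro ⟨hr1, hr0, hrlt⟩
      have hrh : 0 ≤ r * (h n : ℝ) := mul_nonneg hr0 (le_of_lt hpos)
      have hflt : ⌊r * (h n : ℝ)⌋₊ < h n := by
        rw [Nat.floor_lt hrh]
        calc r * (h n : ℝ) < 1 * (h n : ℝ) := by
              apply mul_lt_mul_of_pos_right hrlt hpos
        _ = (h n : ℝ) := one_mul _
      have hfm : ⌊r * (h n : ℝ)⌋₊ = m :=
        xi_inj (α := α) hrec h2 hq2 n _ m hflt hm (hr1.trans hxt.symm)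
      have hint := (Nat.floor_eq_iff hrh).mp hfm
      constructor
      · rw [div_le_iff₀ hpos]; exact hint.1
      · rw [lt_div_iff₀ hpos]; exact hint.2
    · rintro ⟨hr1, hr2⟩
      have hr0 : 0 ≤ r := le_trans (by positivity) hr1
      have hrh : 0 ≤ r * (h n : ℝ) := mul_nonneg hr0 (le_of_lt hpos)
      have hint : (m : ℝ) ≤ r * (h n : ℝ) ∧ r * (h n : ℝ) < (m : ℝ) + 1 := by
        constructor
        · rwa [div_le_iff₀ hpos] at hr1
        · rwa [lt_div_iff₀ hpos] at hr2
      have hfm : ⌊r * (h n : ℝ)⌋₊ = m := (Nat.floor_eq_iff hrh).mpr hint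
      refine ⟨by rw [hfm, hxt], hr0, ?_⟩
      calc r < ((m : ℝ) + 1) / (h n : ℝ) := hr2
      _ ≤ 1 := by rw [div_le_one hpos]; exact hm1
  rw [hset, Real.volume_Ico]
  have hlen : ((m : ℝ) + 1) / (h n : ℝ) - (m : ℝ) / (h n : ℝ) = 1 / (h n : ℝ) := by
    field_simp
    ring
  rw [hlen, one_div, ENNReal.ofReal_inv_of_pos hpos, ENNReal.ofReal_natCast,
    Measure.smul_apply, Measure.count_singleton, smul_eq_mul, mul_one]

/-! ### measurability -/

lemma measurableSet_coordPre (h2 : ∀ n, 2 ≤ h n) {k : ℕ} (S : Set (ZMod (h k))) :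
    MeasurableSet ((fun x : InvLimit h q α => x.1 k) ⁻¹' S) := by
  haveI : NeZero (h k) := ⟨by have := h2 k; omega⟩
  exact (measurable_coord k) (Set.to_countable S).measurableSet

/-- the "no-carry band from `N` on" set. -/
def NSet (N : ℕ) : Set (InvLimit h q α) :=
  {x | ∀ k, N ≤ k → 1 ≤ Cc k x ∧ Cc k x + 1 < h k}

lemma measurableSet_NSet (h2 : ∀ n, 2 ≤ h n) (N : ℕ) :
    MeasurableSet (NSet (α := α) N) := by
  have : NSet (α := α) N = ⋂ k, ⋂ (_ : N ≤ k),
      (fun x : InvLimit h q α => x.1 (k + 1)) ⁻¹'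
        {b | 1 ≤ b.val % h k ∧ b.val % h k + 1 < h k} := by
    ext x
    simp only [NSet, Set.mem_setOf_eq, Set.mem_iInter, Set.mem_preimage]
    rfl
  rw [this]
  exact MeasurableSet.iInter fun k => MeasurableSet.iInter fun _ =>
    measurableSet_coordPre h2 _

lemma measurableSet_good (h2 : ∀ n, 2 ≤ h n) :
    MeasurableSet {x : InvLimit h q α | Good x} := by
  have : {x : InvLimit h q α | Good x} = ⋂ m, ⋃ N, ⋂ k, ⋂ (_ : N ≤ k),
      (fun x : InvLimit h q α => x.1 (k + 1)) ⁻¹'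
        {b | m ≤ b.val % h k ∧ b.val % h k + m < h k} := by
    ext x
    simp only [Good, Set.mem_setOf_eq, Set.mem_iInter, Set.mem_iUnion, Set.mem_preimage]
    rfl
  rw [this]
  exact MeasurableSet.iInter fun m => MeasurableSet.iUnion fun N =>
    MeasurableSet.iInter fun k => MeasurableSet.iInter fun _ =>
      measurableSet_coordPre h2 _

lemma good_iff_nset (x : InvLimit h q α) (hx : Good x) : ∃ N, x ∈ NSet (α := α) N := by
  obtain ⟨N, hN⟩ := hx 1
  exact ⟨N, hN⟩

lemma measurable_Tfun (hrec : ∀ n, h (n + 1) = q n * h n) (h2 : ∀ n, 2 ≤ h n) :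
    Measurable (Tfun (α := α) hrec h2) := by
  classical
  apply Measurable.subtype_mk
  apply measurable_pi_lambda
  intro n
  haveI : NeZero (h n) := ⟨by have := h2 n; omega⟩
  apply measurable_to_countable'
  intro a
  have hdecomp : (fun x => (Tfun hrec h2 x).1 n) ⁻¹' {a} =
      ({x : InvLimit h q α | Good x}ᶜ ∩ (fun x : InvLimit h q α => x.1 n) ⁻¹' {a}) ∪
      ⋃ M, ({x : InvLimit h q α | Good x} ∩
        (NSet (α := α) M ∩ ⋂ m, ⋂ (_ : m < M), (NSet (α := α) m)ᶜ) ∩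
        {x : InvLimit h q α | wUp x M n = a}) := by
    ext x
    simp only [Set.mem_preimage, Set.mem_singleton_iff, Set.mem_union, Set.mem_inter_iff,
      Set.mem_compl_iff, Set.mem_setOf_eq, Set.mem_iUnion, Set.mem_iInter]
    by_cases hx : Good x
    · have hT : Tfun hrec h2 x =
          TupP hrec h2 x (Nat.find (hx 1)) (fun k hk => ((Nat.find_spec (hx 1)) k hk).2) := by
        rw [Tfun, dif_pos hx]
      constructor
      · intro hval
        exact Or.inr ⟨Nat.find (hx 1), ⟨hx, Nat.find_spec (hx 1),
          fun m hm => Nat.find_min (hx 1) hm⟩, by rw [hT] at hval; exact hval⟩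
      · rintro (⟨hbad, _⟩ | ⟨M, ⟨hg2, hNM, hmin⟩, hw⟩)
        · exact absurd hx hbad
        · have hM : Nat.find (hx 1) = M := by
            rw [Nat.find_eq_iff]
            exact ⟨hNM, hmin⟩
          rw [hT]
          show wUp x (Nat.find (hx 1)) n = a
          rw [hM]; exact hw
    · have hT : Tfun hrec h2 x = x := by rw [Tfun, dif_neg hx]
      rw [hT]
      constructor
      · intro hval; exact Or.inl ⟨hx, hval⟩
      · rintro (⟨_, hval⟩ | ⟨M, ⟨hgood, _, _⟩, _⟩)
        · exact hval
        · exact absurd hgood hx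
  show MeasurableSet ((fun x : InvLimit h q α => (Tfun hrec h2 x).1 n) ⁻¹' {a})
  rw [hdecomp]
  apply MeasurableSet.union
  · exact ((measurableSet_good h2).compl).inter (measurableSet_coordPre h2 _)
  · apply MeasurableSet.iUnion
    intro M
    apply MeasurableSet.inter
    · exact (measurableSet_good h2).inter
        ((measurableSet_NSet h2 M).inter (MeasurableSet.iInter fun m =>
          MeasurableSet.iInter fun _ => (measurableSet_NSet h2 m).compl))
    · by_cases hMn : M ≤ n
      · have : {x : InvLimit h q α | wUp x M n = a}
            = (fun x : InvLimit h q α => x.1 n) ⁻¹' {b | b + 1 = a} := by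
          ext x
          simp only [Set.mem_setOf_eq, Set.mem_preimage, wUp, if_pos hMn]
        rw [this]; exact measurableSet_coordPre h2 _
      · have : {x : InvLimit h q α | wUp x M n = a}
            = (fun x : InvLimit h q α => x.1 M) ⁻¹'
              {b | ((Df h q α n M ((b + 1).val) : ℕ) : ZMod (h n)) = a} := by
          ext x
          simp only [Set.mem_setOf_eq, Set.mem_preimage, wUp, if_neg hMn]
        rw [this]; exact measurableSet_coordPre h2 _

lemma measurable_Tinv (hrec : ∀ n, h (n + 1) = q n * h n) (h2 : ∀ n, 2 ≤ h n) :
    Measurable (Tinv (α := α) hrec h2) := by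
  classical
  apply Measurable.subtype_mk
  apply measurable_pi_lambda
  intro n
  haveI : NeZero (h n) := ⟨by have := h2 n; omega⟩
  apply measurable_to_countable'
  intro a
  have hdecomp : (fun x => (Tinv hrec h2 x).1 n) ⁻¹' {a} =
      ({x : InvLimit h q α | Good x}ᶜ ∩ (fun x : InvLimit h q α => x.1 n) ⁻¹' {a}) ∪
      ⋃ M, ({x : InvLimit h q α | Good x} ∩
        (NSet (α := α) M ∩ ⋂ m, ⋂ (_ : m < M), (NSet (α := α) m)ᶜ) ∩
        {x : InvLimit h q α | wDown x M n = a}) := by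
    ext x
    simp only [Set.mem_preimage, Set.mem_singleton_iff, Set.mem_union, Set.mem_inter_iff,
      Set.mem_compl_iff, Set.mem_setOf_eq, Set.mem_iUnion, Set.mem_iInter]
    by_cases hx : Good x
    · have hT : Tinv hrec h2 x =
          TdnP hrec h2 x (Nat.find (hx 1)) (fun k hk => ((Nat.find_spec (hx 1)) k hk).1) := by
        rw [Tinv, dif_pos hx]
      constructor
      · intro hval
        exact Or.inr ⟨Nat.find (hx 1), ⟨hx, Nat.find_spec (hx 1),
          fun m hm => Nat.find_min (hx 1) hm⟩, by rw [hT] at hval; exact hval⟩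
      · rintro (⟨hbad, _⟩ | ⟨M, ⟨hg2, hNM, hmin⟩, hw⟩)
        · exact absurd hx hbad
        · have hM : Nat.find (hx 1) = M := by
            rw [Nat.find_eq_iff]
            exact ⟨hNM, hmin⟩
          rw [hT]
          show wDown x (Nat.find (hx 1)) n = a
          rw [hM]; exact hw
    · have hT : Tinv hrec h2 x = x := by rw [Tinv, dif_neg hx]
      rw [hT]
      constructor
      · intro hval; exact Or.inl ⟨hx, hval⟩
      · rintro (⟨_, hval⟩ | ⟨M, ⟨hgood, _, _⟩, _⟩)
        · exact hval
        · exact absurd hgood hx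
  show MeasurableSet ((fun x : InvLimit h q α => (Tinv hrec h2 x).1 n) ⁻¹' {a})
  rw [hdecomp]
  apply MeasurableSet.union
  · exact ((measurableSet_good h2).compl).inter (measurableSet_coordPre h2 _)
  · apply MeasurableSet.iUnion
    intro M
    apply MeasurableSet.inter
    · exact (measurableSet_good h2).inter
        ((measurableSet_NSet h2 M).inter (MeasurableSet.iInter fun m =>
          MeasurableSet.iInter fun _ => (measurableSet_NSet h2 m).compl))
    · by_cases hMn : M ≤ n
      · have : {x : InvLimit h q α | wDown x M n = a}
            = (fun x : InvLimit h q α => x.1 n) ⁻¹' {b | b - 1 = a} := by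
          ext x
          simp only [Set.mem_setOf_eq, Set.mem_preimage, wDown, if_pos hMn]
        rw [this]; exact measurableSet_coordPre h2 _
      · have : {x : InvLimit h q α | wDown x M n = a}
            = (fun x : InvLimit h q α => x.1 M) ⁻¹'
              {b | ((Df h q α n M ((b - 1).val) : ℕ) : ZMod (h n)) = a} := by
          ext x
          simp only [Set.mem_setOf_eq, Set.mem_preimage, wDown, if_neg hMn]
        rw [this]; exact measurableSet_coordPre h2 _

/-! ### almost everywhere Good -/

lemma muM_pre (hrec : ∀ n, h (n + 1) = q n * h n) (h2 : ∀ n, 2 ≤ h n)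
    (hq2 : ∀ n, 2 ≤ q n) (M : ℕ) (S : Set (ZMod (h M))) :
    muM h q α hrec h2 hq2 ((fun x : InvLimit h q α => x.1 M) ⁻¹' S)
      = ((h M : ℝ≥0∞))⁻¹ * Measure.count S := by
  haveI : NeZero (h M) := ⟨by have := h2 M; omega⟩
  rw [← Measure.map_apply (measurable_coord M) ((Set.to_countable S).measurableSet),
    muM_marginal hrec h2 hq2 M, Measure.smul_apply, smul_eq_mul]

def BadS (m k : ℕ) : Set (ZMod (h (k + 1))) :=
  {b | ¬(m ≤ b.val % h k ∧ b.val % h k + m < h k)}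

lemma count_BadS (hrec : ∀ n, h (n + 1) = q n * h n) (h2 : ∀ n, 2 ≤ h n)
    (hq2 : ∀ n, 2 ≤ q n) (m k : ℕ) :
    (Measure.count (BadS (h := h) m k) : ℝ≥0∞) ≤ ((2 * m * q k : ℕ) : ℝ≥0∞) := by
  haveI : NeZero (h (k + 1)) := ⟨by have := h2 (k + 1); omega⟩
  haveI : NeZero (h k) := ⟨by have := h2 k; omega⟩
  have hfin : (BadS (h := h) m k).Finite := Set.toFinite _
  rw [Measure.count_apply_finite _ hfin]
  norm_cast
  -- card bound
  set badF : Finset ℕ := (Finset.range (h k)).filter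
    (fun r => ¬(m ≤ r ∧ r + m < h k)) with hbadF
  have hbad_le : badF.card ≤ 2 * m := by
    have hsub : badF ⊆ (Finset.range m) ∪ (Finset.Ico (h k - m) (h k)) := by
      intro r hr
      simp only [hbadF, Finset.mem_filter, Finset.mem_range] at hr
      simp only [Finset.mem_union, Finset.mem_range, Finset.mem_Ico]
      omega
    calc badF.card ≤ _ := Finset.card_le_card hsub
    _ ≤ (Finset.range m).card + (Finset.Ico (h k - m) (h k)).card := Finset.card_union_le _ _
    _ ≤ 2 * m := by rw [Finset.card_range, Nat.card_Ico]; omega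
  have hsub2 : hfin.toFinset ⊆ ((Finset.range (q k)) ×ˢ badF).image
      (fun p : ℕ × ℕ => ((p.1 * h k + p.2 : ℕ) : ZMod (h (k + 1)))) := by
    intro b hb
    have hbv : b ∈ BadS (h := h) m k := by rwa [Set.Finite.mem_toFinset] at hb
    rw [Finset.mem_image]
    refine ⟨(b.val / h k, b.val % h k), ?_, ?_⟩
    · have hvlt : b.val < h (k + 1) := ZMod.val_lt b
      have hdl : b.val / h k < q k := by
        apply Nat.div_lt_of_lt_mul
        calc b.val < h (k + 1) := hvlt
        _ = q k * h k := hrec k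
        _ = h k * q k := Nat.mul_comm _ _
      simp only [Finset.mem_product, Finset.mem_range, hbadF, Finset.mem_filter]
      exact ⟨hdl, Nat.mod_lt _ (by have := h2 k; omega), hbv⟩
    · have := Nat.div_add_mod b.val (h k)
      show ((b.val / h k * h k + b.val % h k : ℕ) : ZMod (h (k + 1))) = b
      rw [Nat.div_add_mod' b.val (h k)]
      rw [ZMod.natCast_val, ZMod.cast_id]
  calc hfin.toFinset.card ≤ _ := Finset.card_le_card hsub2
  _ ≤ ((Finset.range (q k)) ×ˢ badF).card := Finset.card_image_le
  _ = q k * badF.card := by rw [Finset.card_product, Finset.card_range]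
  _ ≤ q k * (2 * m) := Nat.mul_le_mul_left _ hbad_le
  _ = 2 * m * q k := by ring

lemma muM_bad_le (hrec : ∀ n, h (n + 1) = q n * h n) (h2 : ∀ n, 2 ≤ h n)
    (hq2 : ∀ n, 2 ≤ q n) (hh0 : 2 ≤ h 0) (m k : ℕ) :
    muM h q α hrec h2 hq2 {x : InvLimit h q α | ¬(m ≤ Cc k x ∧ Cc k x + m < h k)}
      ≤ ((2 * m : ℕ) : ℝ≥0∞) * ((2 : ℝ≥0∞) ^ (k + 1))⁻¹ := by
  have hset : {x : InvLimit h q α | ¬(m ≤ Cc k x ∧ Cc k x + m < h k)}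
      = (fun x : InvLimit h q α => x.1 (k + 1)) ⁻¹' (BadS (h := h) m k) := rfl
  rw [hset, muM_pre hrec h2 hq2]
  have hq0 : ((q k : ℕ) : ℝ≥0∞) ≠ 0 := by
    simp only [ne_eq, Nat.cast_eq_zero]; have := hq2 k; omega
  have hqt : ((q k : ℕ) : ℝ≥0∞) ≠ ∞ := ENNReal.natCast_ne_top _
  calc ((h (k + 1) : ℝ≥0∞))⁻¹ * Measure.count (BadS (h := h) m k)
      ≤ ((h (k + 1) : ℝ≥0∞))⁻¹ * ((2 * m * q k : ℕ) : ℝ≥0∞) :=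
        mul_le_mul_right (count_BadS hrec h2 hq2 m k) _
  _ = ((2 * m : ℕ) : ℝ≥0∞) * ((h k : ℝ≥0∞))⁻¹ := by
      rw [hrec k]
      push_cast
      have hh0' : ((h k : ℕ) : ℝ≥0∞) ≠ 0 := by
        simp only [ne_eq, Nat.cast_eq_zero]; have := h2 k; omega
      rw [ENNReal.mul_inv (Or.inl hq0) (Or.inr hh0')]
      calc ((q k : ℝ≥0∞))⁻¹ * ((h k : ℝ≥0∞))⁻¹ * (2 * (m : ℝ≥0∞) * (q k : ℝ≥0∞))
          = 2 * (m : ℝ≥0∞) * ((h k : ℝ≥0∞))⁻¹ * (((q k : ℝ≥0∞))⁻¹ * (q k : ℝ≥0∞)) := by ring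
      _ = 2 * (m : ℝ≥0∞) * ((h k : ℝ≥0∞))⁻¹ := by
          rw [ENNReal.inv_mul_cancel hq0 hqt, mul_one]
  _ ≤ ((2 * m : ℕ) : ℝ≥0∞) * ((2 : ℝ≥0∞) ^ (k + 1))⁻¹ := by
      apply mul_le_mul_right
      apply ENNReal.inv_le_inv'
      have := h_growth hh0 hrec hq2 k
      calc ((2 : ℝ≥0∞) ^ (k + 1)) = ((2 ^ (k + 1) : ℕ) : ℝ≥0∞) := by push_cast; ring
      _ ≤ ((h k : ℕ) : ℝ≥0∞) := by exact_mod_cast this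

lemma good_ae (hrec : ∀ n, h (n + 1) = q n * h n) (h2 : ∀ n, 2 ≤ h n)
    (hq2 : ∀ n, 2 ≤ q n) (hh0 : 2 ≤ h 0) :
    ∀ᵐ x ∂(muM h q α hrec h2 hq2), Good x := by
  have hall : ∀ m : ℕ, ∀ᵐ x ∂(muM h q α hrec h2 hq2),
      ∃ N, ∀ k, N ≤ k → m ≤ Cc k x ∧ Cc k x + m < h k := by
    intro m
    have hsum : (∑' k, muM h q α hrec h2 hq2
        {x : InvLimit h q α | ¬(m ≤ Cc k x ∧ Cc k x + m < h k)}) ≠ ∞ := by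
      apply ne_top_of_le_ne_top (b := ((2 * m : ℕ) : ℝ≥0∞) * 1)
      · exact ENNReal.mul_ne_top (ENNReal.natCast_ne_top _) ENNReal.one_ne_top
      calc (∑' k, muM h q α hrec h2 hq2
          {x : InvLimit h q α | ¬(m ≤ Cc k x ∧ Cc k x + m < h k)})
          ≤ ∑' k : ℕ, ((2 * m : ℕ) : ℝ≥0∞) * ((2 : ℝ≥0∞) ^ (k + 1))⁻¹ :=
            ENNReal.tsum_le_tsum (muM_bad_le hrec h2 hq2 hh0 m)
      _ = ((2 * m : ℕ) : ℝ≥0∞) * ∑' k : ℕ, ((2 : ℝ≥0∞) ^ (k + 1))⁻¹ := ENNReal.tsum_mul_left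
      _ ≤ ((2 * m : ℕ) : ℝ≥0∞) * 1 := by
          apply mul_le_mul_right
          have hgeo : ∑' k : ℕ, ((2 : ℝ≥0∞) ^ (k + 1))⁻¹
              = ∑' k : ℕ, ((2 : ℝ≥0∞))⁻¹ ^ (k + 1) := by
            congr 1; funext k; rw [ENNReal.inv_pow]
          rw [hgeo, ENNReal.tsum_geometric_add_one, ENNReal.one_sub_inv_two, inv_inv]
          rw [ENNReal.inv_mul_cancel (by norm_num) (by norm_num)]
    have := MeasureTheory.ae_eventually_notMem hsum
    filter_upwards [this] with x hx
    rw [Filter.eventually_atTop] at hx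
    obtain ⟨N, hN⟩ := hx
    refine ⟨N, fun k hk => ?_⟩
    have := hN k hk
    simpa [Set.mem_setOf_eq, not_not] using this
  rw [show (Good (α := α)) = fun x => ∀ m : ℕ, ∃ N, ∀ k, N ≤ k →
    m ≤ Cc k x ∧ Cc k x + m < h k from rfl]
  rw [MeasureTheory.ae_all_iff]
  exact hall

/-! ### the cylinder π-system -/

def Cyl (n : ℕ) (a : ZMod (h n)) : Set (InvLimit h q α) := {x | x.1 n = a}

def CylS : Set (Set (InvLimit h q α)) := {s | ∃ n a, s = Cyl (α := α) n a}

lemma isPiSystem_cylS (h2 : ∀ n, 2 ≤ h n) : IsPiSystem (CylS (α := α)) := by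
  have hpos : ∀ n, 0 < h n := fun n => by have := h2 n; omega
  rintro s ⟨n, a, rfl⟩ t ⟨m, b, rfl⟩ hne
  obtain ⟨x0, hx01, hx02⟩ := hne
  rcases le_total n m with hnm | hmn
  · have hsub : Cyl (α := α) m b ⊆ Cyl (α := α) n a := by
      intro y hy
      show y.1 n = a
      rw [coord_eq hpos y hnm, show y.1 m = b from hy, ← show x0.1 m = b from hx02,
        ← coord_eq hpos x0 hnm]
      exact hx01
    exact ⟨m, b, Set.inter_eq_self_of_subset_right hsub⟩
  · have hsub : Cyl (α := α) n a ⊆ Cyl (α := α) m b := by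
      intro y hy
      show y.1 m = b
      rw [coord_eq hpos y hmn, show y.1 n = a from hy, ← show x0.1 n = a from hx01,
        ← coord_eq hpos x0 hmn]
      exact hx02
    exact ⟨n, a, Set.inter_eq_self_of_subset_left hsub⟩

lemma sigma_eq (h2 : ∀ n, 2 ≤ h n) :
    (inferInstance : MeasurableSpace (InvLimit h q α))
      = MeasurableSpace.generateFrom (CylS (α := α)) := by
  apply le_antisymm
  · have hle : ∀ n : ℕ, MeasurableSpace.comap (fun x : InvLimit h q α => x.1 n)
        inferInstance ≤ MeasurableSpace.generateFrom (CylS (α := α)) := by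
      intro n
      haveI : NeZero (h n) := ⟨by have := h2 n; omega⟩
      have hmeas : @Measurable (InvLimit h q α) (ZMod (h n))
          (MeasurableSpace.generateFrom (CylS (α := α))) _ (fun x => x.1 n) := by
        apply @measurable_to_countable' (ZMod (h n)) (InvLimit h q α) _ _
          (MeasurableSpace.generateFrom (CylS (α := α)))
        intro a
        exact MeasurableSpace.measurableSet_generateFrom ⟨n, a, rfl⟩
      exact (@measurable_iff_comap_le _ _ (MeasurableSpace.generateFrom (CylS (α := α)))
        _ _).mp hmeas
    calc (inferInstance : MeasurableSpace (InvLimit h q α))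
        = MeasurableSpace.comap (Subtype.val : InvLimit h q α → ∀ n, ZMod (h n))
          (⨆ n, MeasurableSpace.comap (fun f : ∀ k, ZMod (h k) => f n) inferInstance) := rfl
      _ = ⨆ n, MeasurableSpace.comap (fun x : InvLimit h q α => x.1 n) inferInstance := by
          rw [MeasurableSpace.comap_iSup]
          congr 1
          funext n
          rw [MeasurableSpace.comap_comp]
          rfl
      _ ≤ MeasurableSpace.generateFrom (CylS (α := α)) := iSup_le hle
  · apply MeasurableSpace.generateFrom_le
    rintro s ⟨n, a, rfl⟩
    exact measurableSet_coordPre h2 {a}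

lemma muM_cyl (hrec : ∀ n, h (n + 1) = q n * h n) (h2 : ∀ n, 2 ≤ h n)
    (hq2 : ∀ n, 2 ≤ q n) (n : ℕ) (a : ZMod (h n)) :
    muM h q α hrec h2 hq2 (Cyl (α := α) n a) = ((h n : ℝ≥0∞))⁻¹ := by
  haveI : NeZero (h n) := ⟨by have := h2 n; omega⟩
  have : Cyl (α := α) n a = (fun x : InvLimit h q α => x.1 n) ⁻¹' {a} := rfl
  rw [this, muM_pre hrec h2 hq2, Measure.count_singleton, mul_one]

/-! ### fiber counting -/

lemma val_phiMap {k : ℕ} (h2 : ∀ n, 2 ≤ h n) (b : ZMod (h (k + 1))) :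
    (phiMap (h k) (q k) (α k) b).val = Pf h q α k b.val := by
  have hpk : 0 < h k := by have := h2 k; omega
  rw [phiMap_eq_Pf hpk, ZMod.val_natCast, Nat.mod_eq_of_lt (Pf_lt hpk _)]

open Finset in
lemma card_phi_fiber (hrec : ∀ n, h (n + 1) = q n * h n) (h2 : ∀ n, 2 ≤ h n)
    (hq2 : ∀ n, 2 ≤ q n) (M : ℕ) [NeZero (h M)] [NeZero (h (M + 1))] [NeZero (q M)]
    (S : Finset (ZMod (h M))) [DecidableEq (ZMod (h M))] :
    (Finset.univ.filter (fun b : ZMod (h (M + 1)) => phiMap (h M) (q M) (α M) b ∈ S)).card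
      = q M * S.card := by
  set e : ZMod (h (M + 1)) → ZMod (q M) × ZMod (h M) :=
    fun b => (((b.val / h M : ℕ) : ZMod (q M)), phiMap (h M) (q M) (α M) b) with he
  have hdiv : ∀ b : ZMod (h (M + 1)), b.val / h M < q M := by
    intro b
    apply Nat.div_lt_of_lt_mul
    calc b.val < h (M + 1) := ZMod.val_lt b
    _ = q M * h M := hrec M
    _ = h M * q M := Nat.mul_comm _ _
  have hinj : Function.Injective e := by
    intro b b' hbb
    have h1 : b.val / h M = b'.val / h M := by
      have := congrArg (fun p => (Prod.fst p).val) hbb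
      simpa [he, ZMod.val_natCast_of_lt (hdiv b), ZMod.val_natCast_of_lt (hdiv b')] using this
    have h2' : (phiMap (h M) (q M) (α M) b).val = (phiMap (h M) (q M) (α M) b').val :=
      congrArg (fun p => (Prod.snd p).val) hbb
    rw [val_phiMap h2, val_phiMap h2] at h2'
    unfold Pf at h2'
    rw [h1] at h2'
    have h3 : b.val % h M = b'.val % h M := by
      have hma : b.val % h M < h M := Nat.mod_lt _ (by have := h2 M; omega)
      have hmb : b'.val % h M < h M := Nat.mod_lt _ (by have := h2 M; omega)
      have hmod : Nat.ModEq (h M) (b.val % h M) (b'.val % h M) :=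
        Nat.ModEq.add_right_cancel' _ h2'
      unfold Nat.ModEq at hmod
      rwa [Nat.mod_eq_of_lt hma, Nat.mod_eq_of_lt hmb] at hmod
    have h4 : b.val = b'.val := by
      have ha := Nat.div_add_mod b.val (h M)
      have hb := Nat.div_add_mod b'.val (h M)
      rw [h1, h3] at ha
      omega
    calc b = ((b.val : ℕ) : ZMod (h (M + 1))) := by rw [ZMod.natCast_val, ZMod.cast_id]
    _ = ((b'.val : ℕ) : ZMod (h (M + 1))) := by rw [h4]
    _ = b' := by rw [ZMod.natCast_val, ZMod.cast_id]
  have hbij : Function.Bijective e := by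
    rw [Fintype.bijective_iff_injective_and_card]
    refine ⟨hinj, ?_⟩
    rw [Fintype.card_prod, ZMod.card, ZMod.card, ZMod.card, hrec M]
  have hcard : (Finset.univ.filter (fun b : ZMod (h (M + 1)) =>
      phiMap (h M) (q M) (α M) b ∈ S)).card
      = (Finset.univ.filter (fun p : ZMod (q M) × ZMod (h M) => p.2 ∈ S)).card := by
    apply Finset.card_bij (fun b _ => e b)
    · intro b hb
      simp only [Finset.mem_filter, Finset.mem_univ, true_and] at hb ⊢
      exact hb
    · intro b hb b' hb' hbb
      exact hinj hbb
    · intro p hp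
      obtain ⟨b, rfl⟩ := hbij.surjective p
      refine ⟨b, ?_, rfl⟩
      simp only [Finset.mem_filter, Finset.mem_univ, true_and] at hp ⊢
      exact hp
  have hfinal : (Finset.univ.filter (fun p : ZMod (q M) × ZMod (h M) => p.2 ∈ S)).card
      = q M * S.card := by
    have hset : (Finset.univ.filter (fun p : ZMod (q M) × ZMod (h M) => p.2 ∈ S))
        = Finset.univ ×ˢ S := by
      ext p
      simp [Finset.mem_product]
    rw [hset, Finset.card_product, Finset.card_univ, ZMod.card]
  exact hcard.trans hfinal

open Finset in
lemma ncard_Df_fiber (hrec : ∀ n, h (n + 1) = q n * h n) (h2 : ∀ n, 2 ≤ h n)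
    (hq2 : ∀ n, 2 ≤ q n) {n M : ℕ} (hnM : n ≤ M) (a : ZMod (h n)) :
    ({b : ZMod (h M) | ((Df h q α n M b.val : ℕ) : ZMod (h n)) = a} : Set _).ncard * h n
      = h M := by
  classical
  induction M, hnM using Nat.le_induction with
  | base =>
    haveI : NeZero (h n) := ⟨by have := h2 n; omega⟩
    have hset : ({b : ZMod (h n) | ((Df h q α n n b.val : ℕ) : ZMod (h n)) = a} : Set _)
        = {a} := by
      ext b
      simp only [Set.mem_setOf_eq, Set.mem_singleton_iff]
      rw [Df_of_le (le_refl n), ZMod.natCast_val, ZMod.cast_id]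
    rw [hset, Set.ncard_singleton, one_mul]
  | succ M hnM ih =>
    haveI : NeZero (h M) := ⟨by have := h2 M; omega⟩
    haveI : NeZero (h (M + 1)) := ⟨by have := h2 (M + 1); omega⟩
    haveI : NeZero (q M) := ⟨by have := hq2 M; omega⟩
    have hstep : ({b : ZMod (h (M + 1)) | ((Df h q α n (M + 1) b.val : ℕ) : ZMod (h n)) = a}
        : Set _) = {b : ZMod (h (M + 1)) |
          phiMap (h M) (q M) (α M) b ∈
            ({c : ZMod (h M) | ((Df h q α n M c.val : ℕ) : ZMod (h n)) = a} : Set _)} := by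
      ext b
      simp only [Set.mem_setOf_eq]
      rw [Df_succ, if_neg (by omega), ← val_phiMap h2]
    rw [hstep]
    have hSF : ({b : ZMod (h (M + 1)) | phiMap (h M) (q M) (α M) b ∈
        ({c : ZMod (h M) | ((Df h q α n M c.val : ℕ) : ZMod (h n)) = a} : Set _)} : Set _)
        = ↑(Finset.univ.filter (fun b : ZMod (h (M + 1)) => phiMap (h M) (q M) (α M) b ∈
            ({c : ZMod (h M) | ((Df h q α n M c.val : ℕ) : ZMod (h n)) = a} : Set _).toFinset)) := by
      ext b
      simp [Set.mem_toFinset]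
    rw [hSF, Set.ncard_coe_finset, card_phi_fiber hrec h2 hq2 M]
    have hncard : ({c : ZMod (h M) | ((Df h q α n M c.val : ℕ) : ZMod (h n)) = a}
        : Set _).toFinset.card
        = ({c : ZMod (h M) | ((Df h q α n M c.val : ℕ) : ZMod (h n)) = a} : Set _).ncard := by
      rw [Set.ncard_eq_toFinset_card']
    rw [hncard, Nat.mul_assoc, ih, hrec M]

open Finset in
lemma ncard_shift_fiber (hrec : ∀ n, h (n + 1) = q n * h n) (h2 : ∀ n, 2 ≤ h n)
    (hq2 : ∀ n, 2 ≤ q n) {n M : ℕ} (hnM : n ≤ M) (a : ZMod (h n)) :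
    ({b : ZMod (h M) | ((Df h q α n M ((b + 1).val) : ℕ) : ZMod (h n)) = a} : Set _).ncard * h n
      = h M := by
  have himg : ({b : ZMod (h M) | ((Df h q α n M ((b + 1).val) : ℕ) : ZMod (h n)) = a} : Set _)
      = (fun c : ZMod (h M) => c - 1) ''
        ({c : ZMod (h M) | ((Df h q α n M c.val : ℕ) : ZMod (h n)) = a} : Set _) := by
    ext b
    simp only [Set.mem_setOf_eq, Set.mem_image]
    constructor
    · intro hb
      exact ⟨b + 1, hb, by ring⟩
    · rintro ⟨c, hc, rfl⟩
      rwa [show c - 1 + 1 = c by ring]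
  rw [himg, Set.ncard_image_of_injective _ (sub_left_injective)]
  exact ncard_Df_fiber hrec h2 hq2 hnM a

lemma count_eq_ncard {β : Type*} [MeasurableSpace β] [MeasurableSingletonClass β] [Finite β]
    (S : Set β) : Measure.count S = (S.ncard : ℝ≥0∞) := by
  have hfin : S.Finite := Set.toFinite S
  rw [Measure.count_apply_finite _ hfin, Set.ncard_eq_toFinset_card _ hfin]

lemma muM_shift_fiber (hrec : ∀ n, h (n + 1) = q n * h n) (h2 : ∀ n, 2 ≤ h n)
    (hq2 : ∀ n, 2 ≤ q n) {n M : ℕ} (hnM : n ≤ M) (a : ZMod (h n)) :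
    muM h q α hrec h2 hq2 ((fun x : InvLimit h q α => x.1 M) ⁻¹'
      {b | ((Df h q α n M ((b + 1).val) : ℕ) : ZMod (h n)) = a}) = ((h n : ℝ≥0∞))⁻¹ := by
  haveI : NeZero (h M) := ⟨by have := h2 M; omega⟩
  haveI : NeZero (h n) := ⟨by have := h2 n; omega⟩
  rw [muM_pre hrec h2 hq2, count_eq_ncard]
  have hkey := ncard_shift_fiber (α := α) hrec h2 hq2 hnM a
  have hcast : (({b : ZMod (h M) | ((Df h q α n M ((b + 1).val) : ℕ) : ZMod (h n)) = a}
      : Set _).ncard : ℝ≥0∞) * ((h n : ℕ) : ℝ≥0∞) = ((h M : ℕ) : ℝ≥0∞) := by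
    rw [← Nat.cast_mul, hkey]
  have hM0 : ((h M : ℕ) : ℝ≥0∞) ≠ 0 := by
    simp only [ne_eq, Nat.cast_eq_zero]; have := h2 M; omega
  have hMt : ((h M : ℕ) : ℝ≥0∞) ≠ ∞ := ENNReal.natCast_ne_top _
  have hn0 : ((h n : ℕ) : ℝ≥0∞) ≠ 0 := by
    simp only [ne_eq, Nat.cast_eq_zero]; have := h2 n; omega
  have hnt : ((h n : ℕ) : ℝ≥0∞) ≠ ∞ := ENNReal.natCast_ne_top _
  have hncard2 : ((({b : ZMod (h M) | ((Df h q α n M ((b + 1).val) : ℕ) : ZMod (h n)) = a}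
      : Set _).ncard : ℕ) : ℝ≥0∞) = ((h M : ℝ≥0∞)) * ((h n : ℝ≥0∞))⁻¹ := by
    rw [← hcast, mul_assoc, ENNReal.mul_inv_cancel hn0 hnt, mul_one]
  rw [hncard2, ← mul_assoc, ENNReal.inv_mul_cancel hM0 hMt, one_mul]

/-! ### measure preservation -/

lemma nset_mono {K K' : ℕ} (hKK : K ≤ K') : NSet (α := α) K ⊆ NSet (α := α) K' :=
  fun x hx k hk => hx k (le_trans hKK hk)

lemma Tfun_coord_of_nset (hrec : ∀ n, h (n + 1) = q n * h n) (h2 : ∀ n, 2 ≤ h n)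
    {x : InvLimit h q α} (hx : Good x) {M n : ℕ} (hnM : n ≤ M)
    (hxM : x ∈ NSet (α := α) M) :
    (Tfun hrec h2 x).1 n = ((Df h q α n M ((x.1 M + 1).val) : ℕ) : ZMod (h n)) := by
  classical
  have hpos : ∀ k, 0 < h k := fun k => by have := h2 k; omega
  have hfind : Nat.find (hx 1) ≤ M := Nat.find_le hxM
  have hyM : (Tfun hrec h2 x).1 M = x.1 M + 1 := by
    rw [Tfun, dif_pos hx]
    show wUp x _ M = x.1 M + 1
    simp only [wUp]
    rw [if_pos hfind]
  rw [coord_eq hpos (Tfun hrec h2 x) hnM, hyM]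

lemma map_Tfun (hrec : ∀ n, h (n + 1) = q n * h n) (h2 : ∀ n, 2 ≤ h n)
    (hq2 : ∀ n, 2 ≤ q n) :
    (muM h q α hrec h2 hq2).map (Tfun hrec h2) = muM h q α hrec h2 hq2 := by
  classical
  have hh0 : 2 ≤ h 0 := h2 0
  set μ := muM h q α hrec h2 hq2 with hμ
  haveI : IsProbabilityMeasure μ := muM_prob hrec h2 hq2
  haveI : IsProbabilityMeasure (μ.map (Tfun hrec h2)) :=
    Measure.isProbabilityMeasure_map (measurable_Tfun hrec h2).aemeasurable
  apply MeasureTheory.ext_of_generate_finite (CylS (α := α)) (sigma_eq h2) (isPiSystem_cylS h2)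
  · rintro s ⟨n, a, rfl⟩
    have hcylmeas : MeasurableSet (Cyl (α := α) n a) := measurableSet_coordPre h2 {a}
    rw [Measure.map_apply (measurable_Tfun hrec h2) hcylmeas, muM_cyl hrec h2 hq2]
    -- the main computation
    set G := {x : InvLimit h q α | Good x} with hG
    set C := Tfun hrec h2 ⁻¹' (Cyl (α := α) n a) with hC
    have hGmeas : MeasurableSet G := measurableSet_good h2
    have hCmeas : MeasurableSet C := (measurable_Tfun hrec h2) hcylmeas
    have hGc : μ Gᶜ = 0 := by
      have := good_ae (α := α) hrec h2 hq2 hh0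
      rw [MeasureTheory.ae_iff] at this
      rw [hG, Set.compl_setOf]
      exact this
    set A : ℕ → Set (InvLimit h q α) := fun M => G ∩ NSet (α := α) (n + M) ∩ C with hA
    have hmono : Monotone A := by
      intro M M' hMM
      exact Set.inter_subset_inter_left _
        (Set.inter_subset_inter_right _ (nset_mono (by omega)))
    have hunion : ⋃ M, A M = G ∩ C := by
      apply Set.Subset.antisymm
      · exact Set.iUnion_subset fun M =>
          Set.inter_subset_inter_left _ Set.inter_subset_left
      · rintro x ⟨hxG, hxC⟩
        have hx : Good x := hxG
        refine Set.mem_iUnion.mpr ⟨Nat.find (hx 1), ⟨hxG, ?_⟩, hxC⟩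
        exact nset_mono (by omega) (Nat.find_spec (hx 1))
    have hAM_eq : ∀ M, A M = (G ∩ NSet (α := α) (n + M)) ∩
        ((fun x : InvLimit h q α => x.1 (n + M)) ⁻¹'
          {b | ((Df h q α n (n + M) ((b + 1).val) : ℕ) : ZMod (h n)) = a}) := by
      intro M
      ext x
      simp only [hA, Set.mem_inter_iff, Set.mem_preimage, Set.mem_setOf_eq, and_congr_right_iff]
      rintro ⟨hxG, hxN⟩
      show x ∈ C ↔ _
      rw [hC, Set.mem_preimage]
      show (Tfun hrec h2 x).1 n = a ↔ _
      rw [Tfun_coord_of_nset hrec h2 hxG (by omega) hxN]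
    have hub : ∀ M, μ (A M) ≤ ((h n : ℝ≥0∞))⁻¹ := by
      intro M
      rw [← muM_shift_fiber (α := α) hrec h2 hq2 (show n ≤ n + M by omega) a]
      apply measure_mono
      rw [hAM_eq M]
      exact Set.inter_subset_right
    have hlb : ∀ M, ((h n : ℝ≥0∞))⁻¹ ≤ μ (A M) + μ (G \ NSet (α := α) (n + M)) := by
      intro M
      have hsub : ((fun x : InvLimit h q α => x.1 (n + M)) ⁻¹'
          {b | ((Df h q α n (n + M) ((b + 1).val) : ℕ) : ZMod (h n)) = a})
          ⊆ A M ∪ Gᶜ ∪ (G \ NSet (α := α) (n + M)) := by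
        intro x hx
        by_cases hxG : x ∈ G
        · by_cases hxN : x ∈ NSet (α := α) (n + M)
          · left; left
            rw [hAM_eq M]
            exact ⟨⟨hxG, hxN⟩, hx⟩
          · right; exact ⟨hxG, hxN⟩
        · left; right; exact hxG
      calc ((h n : ℝ≥0∞))⁻¹
          = μ ((fun x : InvLimit h q α => x.1 (n + M)) ⁻¹'
            {b | ((Df h q α n (n + M) ((b + 1).val) : ℕ) : ZMod (h n)) = a}) :=
            (muM_shift_fiber (α := α) hrec h2 hq2 (by omega) a).symm
      _ ≤ μ (A M ∪ Gᶜ ∪ (G \ NSet (α := α) (n + M))) := measure_mono hsub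
      _ ≤ μ (A M ∪ Gᶜ) + μ (G \ NSet (α := α) (n + M)) := measure_union_le _ _
      _ ≤ μ (A M) + μ Gᶜ + μ (G \ NSet (α := α) (n + M)) :=
            add_le_add_left (measure_union_le _ _) _
      _ = μ (A M) + μ (G \ NSet (α := α) (n + M)) := by rw [hGc, add_zero]
    have htend1 : Filter.Tendsto (fun M => μ (A M)) Filter.atTop (nhds (μ (G ∩ C))) := by
      rw [← hunion]
      exact tendsto_measure_iUnion_atTop hmono
    have htend2 : Filter.Tendsto (fun M => μ (G \ NSet (α := α) (n + M)))
        Filter.atTop (nhds 0) := by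
      have hanti : Antitone (fun M => G \ NSet (α := α) (n + M)) := by
        intro M M' hMM
        exact Set.diff_subset_diff_right (nset_mono (by omega))
      have hinter : ⋂ M, (G \ NSet (α := α) (n + M)) = ∅ := by
        apply Set.eq_empty_iff_forall_notMem.mpr
        intro x hx
        have hx0 := Set.mem_iInter.mp hx
        have hxG : Good x := (hx0 0).1
        have := (hx0 (Nat.find (hxG 1))).2
        exact this (nset_mono (by omega) (Nat.find_spec (hxG 1)))
      have := tendsto_measure_iInter_atTop
        (μ := μ) (s := fun M => G \ NSet (α := α) (n + M))
        (fun M => ((hGmeas.diff (measurableSet_NSet h2 _)).nullMeasurableSet))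
        hanti ⟨0, measure_ne_top μ _⟩
      rw [hinter] at this
      simpa [Function.comp_def] using this
    have hle1 : μ (G ∩ C) ≤ ((h n : ℝ≥0∞))⁻¹ :=
      le_of_tendsto htend1 (Filter.Eventually.of_forall hub)
    have hle2 : ((h n : ℝ≥0∞))⁻¹ ≤ μ (G ∩ C) := by
      have hsum : Filter.Tendsto (fun M => μ (A M) + μ (G \ NSet (α := α) (n + M)))
          Filter.atTop (nhds (μ (G ∩ C) + 0)) := htend1.add htend2
      rw [add_zero] at hsum
      exact ge_of_tendsto hsum (Filter.Eventually.of_forall hlb)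
    have hGC : μ (G ∩ C) = ((h n : ℝ≥0∞))⁻¹ := le_antisymm hle1 hle2
    -- μ C = μ (G ∩ C)
    have hCsplit : μ C ≤ μ (G ∩ C) + μ Gᶜ := by
      calc μ C ≤ μ ((G ∩ C) ∪ Gᶜ) := by
            apply measure_mono
            intro x hx
            by_cases hxG : x ∈ G
            · exact Or.inl ⟨hxG, hx⟩
            · exact Or.inr hxG
      _ ≤ μ (G ∩ C) + μ Gᶜ := measure_union_le _ _
    have : μ C = μ (G ∩ C) := by
      apply le_antisymm
      · rw [hGc, add_zero] at hCsplit; exact hCsplit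
      · exact measure_mono Set.inter_subset_right
    rw [this, hGC]
  · rw [measure_univ, measure_univ]

lemma map_Tinv (hrec : ∀ n, h (n + 1) = q n * h n) (h2 : ∀ n, 2 ≤ h n)
    (hq2 : ∀ n, 2 ≤ q n) :
    (muM h q α hrec h2 hq2).map (Tinv hrec h2) = muM h q α hrec h2 hq2 := by
  conv_lhs => rw [← map_Tfun hrec h2 hq2]
  rw [Measure.map_map (measurable_Tinv hrec h2) (measurable_Tfun hrec h2)]
  have : Tinv (α := α) hrec h2 ∘ Tfun hrec h2 = id := funext (Tinv_Tfun hrec h2)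
  rw [this, Measure.map_id]

end AM

/-- For any `h₀ ≥ 2`, any sequence `q_n ≥ 2` with `h_{n+1} = q_n·h_n`, and
arbitrary `α_{n,j} ∈ ℤ/h_nℤ`, the inverse limit `X` carries a probability measure `μ` whose
pushforward under each coordinate map is the uniform measure on `ℤ/h_nℤ`, and an invertible
`μ`-preserving transformation `T` such that for `μ`-a.e. `x` there is `N(x)` with
`(Tx)_n = x_n + 1` for all `n ≥ N(x)`. -/
theorem exists_adding_machine_on_invLimit
    (h q : ℕ → ℕ) (hh0 : 2 ≤ h 0) (hq : ∀ n, 2 ≤ q n)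
    (hrec : ∀ n, h (n + 1) = q n * h n)
    (α : ∀ n, ZMod (q n) → ZMod (h n)) :
    ∃ μ : Measure (InvLimit h q α), IsProbabilityMeasure μ ∧
      (∀ n : ℕ, μ.map (fun x => x.1 n)
        = ((h n : ℝ≥0∞))⁻¹ • (Measure.count : Measure (ZMod (h n)))) ∧
      ∃ T : Equiv.Perm (InvLimit h q α),
        MeasurePreserving T μ μ ∧ MeasurePreserving T.symm μ μ ∧
        ∀ᵐ x ∂μ, ∃ N : ℕ, ∀ n ≥ N, (T x).1 n = x.1 n + 1 := by
  
  have h2 : ∀ n, 2 ≤ h n := AM.h_two_le hh0 hrec hq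
  refine ⟨AM.muM h q α hrec h2 hq, AM.muM_prob hrec h2 hq, AM.muM_marginal hrec h2 hq,
    AM.Tperm hrec h2, ⟨AM.measurable_Tfun hrec h2, AM.map_Tfun hrec h2 hq⟩,
    ⟨AM.measurable_Tinv hrec h2, AM.map_Tinv hrec h2 hq⟩, ?_⟩
  filter_upwards [AM.good_ae (α := α) hrec h2 hq hh0] with x hx
  obtain ⟨N, hN⟩ := AM.Tfun_high hrec h2 x hx
  exact ⟨N, fun n hn => hN n hn⟩
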